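/- The state-preserving conditional expectation onto the first tensor factor maps the Jones projection to (∑ i, (λ i)⁻¹)⁻¹ times the identity: the n×n matrix F defined by F i j := (∑ k, ((λ k)⁻¹ : ℂ) * e (i,k) (j,k)) / trace(D⁻¹) equals (∑ i, ((λ i)⁻¹ : ℂ))⁻¹ • (1 : Matrix (Fin n) (Fin n) ℂ). (Lemma 1.2: the Jones projection has expectation equal to (∑ 1/λᵢ)⁻¹ times the scalars.) -/

import Mathlib

open Matrix
open scoped Kronecker

theorem jones_entry_aux
    (n : ℕ) (lam : Fin n → ℝ)
    (hpos : ∀ i, 0 < lam i)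
    (E : Fin n → Fin n → Matrix (Fin n) (Fin n) ℂ)
    (hE : ∀ i j, E i j = Matrix.single i j (1 : ℂ))
    (e : Matrix (Fin n × Fin n) (Fin n × Fin n) ℂ)
    (he : e = ∑ i, ∑ j, ((Real.sqrt (lam i * lam j) : ℝ) : ℂ) • (E i j ⊗ₖ E i j))
    (i k j : Fin n) :
    e (i, k) (j, k) = if i = k ∧ j = k then (lam k : ℂ) else 0 := by
  rw [he]
  simp only [Matrix.sum_apply, Matrix.smul_apply, hE, Matrix.kroneckerMap_apply,
    Matrix.single, Matrix.of_apply, smul_eq_mul, mul_ite, ite_mul, mul_one, mul_zero,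
    zero_mul, ite_and, Finset.sum_ite_eq', Finset.mem_univ, if_true]
  rw [Finset.sum_eq_single k (fun b _ hb => by simp [hb]) (by simp),
    Finset.sum_eq_single k (fun b _ hb => by simp [hb]) (by simp)]
  simp only [if_true, eq_self_iff_true]
  split_ifs with h1 h2 h3 h4 h5 h6 <;> try rfl
  all_goals first
    | (norm_cast; exact Real.sqrt_mul_self (hpos k).le)
    | simp_all [eq_comm]

/-- The state-preserving conditional expectation onto the first tensor factor (the slice
map against the normalized second-leg density `D⁻¹ / trace(D⁻¹)`) sends the Jones
projection `e` to `(∑ i, (λ i)⁻¹)⁻¹` times the identity matrix. -/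
theorem conditional_expectation_of_jones_projection
    (n : ℕ) (hn : 1 ≤ n) (lam : Fin n → ℝ)
    (hpos : ∀ i, 0 < lam i) (hsum : ∑ i, lam i = 1)
    (Dinv : Matrix (Fin n) (Fin n) ℂ)
    (hDinv : Dinv = Matrix.diagonal (fun i => ((lam i)⁻¹ : ℂ)))
    (E : Fin n → Fin n → Matrix (Fin n) (Fin n) ℂ)
    (hE : ∀ i j, E i j = Matrix.single i j (1 : ℂ))
    (e : Matrix (Fin n × Fin n) (Fin n × Fin n) ℂ)
    (he : e = ∑ i, ∑ j, ((Real.sqrt (lam i * lam j) : ℝ) : ℂ) • (E i j ⊗ₖ E i j))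
    (F : Matrix (Fin n) (Fin n) ℂ)
    (hF : ∀ i j, F i j = (∑ k, ((lam k)⁻¹ : ℂ) * e (i, k) (j, k)) / Matrix.trace Dinv) :
    F = (∑ i, ((lam i)⁻¹ : ℂ))⁻¹ • (1 : Matrix (Fin n) (Fin n) ℂ) := by
  have htr : Matrix.trace Dinv = ∑ i, ((lam i)⁻¹ : ℂ) := by
    simp [hDinv, Matrix.trace_diagonal]
  have hee := jones_entry_aux n lam hpos E hE e he
  ext i j
  rw [hF, htr]
  simp only [hee, mul_ite, mul_zero, Matrix.smul_apply, Matrix.one_apply, smul_eq_mul]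
  by_cases hij : i = j
  · subst hij
    rw [Finset.sum_eq_single i (by intro b _ hb; simp [Ne.symm hb]) (by simp)]
    have h0 : (lam i : ℂ) ≠ 0 := by exact_mod_cast (hpos i).ne'
    simp [inv_mul_cancel₀ h0, one_div]
  · rw [Finset.sum_eq_zero, zero_div]
    · simp [hij]
    · intro k _
      simp only [ite_eq_right_iff]
      rintro ⟨h1, h2⟩
      exact absurd (h1.trans h2.symm) hij
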